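/- Deterministic entropy condensers yield very strong extractors: let ε ∈ [0,1], D | m, and h : {0,1}^n → {0,1}^m with H(h(X)) ≥ (1−ε)m for X ∼ μ, for every μ in a family F. Define g(x,s) as the s-th block of m/D bits of h(x). Then g is a very strong δ-extractor for F with δ = sqrt((ln 2)/2 · ε · m/D), provided (ln 2)/2 · ε ≤ D/m. -/

import Mathlib

open Finset

/-- `μ` is a probability distribution on the finite type `A`. -/
def IsDist {A : Type*} [Fintype A] (μ : A → ℝ) : Prop :=
  (∀ a, 0 ≤ μ a) ∧ ∑ a, μ a = 1

open Classical in
/-- Probability of an event under a distribution on a finite type. -/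
noncomputable def Pr {A : Type*} [Fintype A] (μ : A → ℝ) (p : A → Prop) : ℝ :=
  ∑ a, if p a then μ a else 0

/-- Base-2 Shannon entropy of the push-forward of `μ` under `f`. -/
noncomputable def pushH {Ω β : Type*} [Fintype Ω] [Fintype β]
    (μ : Ω → ℝ) (f : Ω → β) : ℝ :=
  ∑ b, Pr μ (fun x => f x = b) * Real.logb 2 (Pr μ (fun x => f x = b))⁻¹

/-- The "very strong extractor" error of `g : Ω × [D] → {0,1}^r` on `μ`:
`E_{T uniform, Z∼μ} ‖ν^μ_{T, g(Z,1),…,g(Z,T−1)} − U‖₁`, where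
`ν^μ_{s,y₁,…,y_{s−1}}` is the conditional distribution of `g(X,s)` given
`g(X,t) = y_t` for all `t < s`. -/
noncomputable def vsErr {Ω : Type*} [Fintype Ω] {D r : ℕ}
    (μ : Ω → ℝ) (g : Ω → Fin D → (Fin r → Bool)) : ℝ :=
  (D : ℝ)⁻¹ * ∑ s : Fin D, ∑ z, μ z *
    ∑ y : Fin r → Bool,
      |Pr μ (fun x => g x s = y ∧ ∀ t, t < s → g x t = g z t)
          / Pr μ (fun x => ∀ t, t < s → g x t = g z t)
        - ((2 : ℝ) ^ r)⁻¹|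



-- log x ≥ 1 - 1/x
lemma log_ge (x : ℝ) (hx : 0 < x) : 1 - x⁻¹ ≤ Real.log x := by
  have h := Real.log_le_sub_one_of_pos (inv_pos.mpr hx)
  rw [Real.log_inv] at h; linarith

noncomputable def psi (x : ℝ) : ℝ := (x + 1) * Real.log x - 2 * (x - 1)

lemma psi_hasDeriv (x : ℝ) (hx : 0 < x) :
    HasDerivAt psi (Real.log x + x⁻¹ - 1) x := by
  have h1 : HasDerivAt (fun x : ℝ => (x + 1) * Real.log x) (1 * Real.log x + (x + 1) * x⁻¹) x := by
    exact ((hasDerivAt_id x).add_const 1).mul (Real.hasDerivAt_log hx.ne')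
  have h2 : HasDerivAt (fun x : ℝ => 2 * (x - 1)) 2 x := by
    simpa using ((hasDerivAt_id x).sub_const 1).const_mul 2
  have := h1.sub h2
  refine this.congr_deriv ?_
  have hxx : x * x⁻¹ = 1 := mul_inv_cancel₀ hx.ne'
  linear_combination hxx

lemma psi_mono : MonotoneOn psi (Set.Ioi 0) := by
  have hd : ∀ x ∈ Set.Ioi (0:ℝ), HasDerivAt psi (Real.log x + x⁻¹ - 1) x :=
    fun x hx => psi_hasDeriv x hx
  have hdiff : DifferentiableOn ℝ psi (Set.Ioi 0) :=
    fun x hx => ((hd x hx).differentiableAt).differentiableWithinAt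
  apply monotoneOn_of_deriv_nonneg (convex_Ioi 0) hdiff.continuousOn
  · rwa [interior_Ioi]
  · intro x hx
    rw [interior_Ioi] at hx
    rw [(hd x hx).deriv]
    have := log_ge x hx
    linarith

lemma psi_nonneg {x : ℝ} (hx : 1 ≤ x) : 0 ≤ psi x := by
  have := psi_mono (Set.mem_Ioi.mpr one_pos) (Set.mem_Ioi.mpr (lt_of_lt_of_le one_pos hx)) hx
  simpa [psi] using this

lemma psi_nonpos {x : ℝ} (hx0 : 0 < x) (hx : x ≤ 1) : psi x ≤ 0 := by
  have := psi_mono (Set.mem_Ioi.mpr hx0) (Set.mem_Ioi.mpr one_pos) hx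
  simpa [psi] using this

noncomputable def phi (x : ℝ) : ℝ := (2*x + 4) * (x * Real.log x - x + 1) - 3 * (x - 1)^2

lemma phi_hasDeriv (x : ℝ) (hx : 0 < x) : HasDerivAt phi (4 * psi x) x := by
  have h1 : HasDerivAt (fun x : ℝ => x * Real.log x) (1 * Real.log x + x * x⁻¹) x :=
    (hasDerivAt_id x).mul (Real.hasDerivAt_log hx.ne')
  have h2 : HasDerivAt (fun x : ℝ => x * Real.log x - x + 1)
      (1 * Real.log x + x * x⁻¹ - 1) x := (h1.sub (hasDerivAt_id x)).add_const 1
  have h3 : HasDerivAt (fun x : ℝ => 2*x + 4) 2 x := by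
    simpa using ((hasDerivAt_id x).const_mul 2).add_const 4
  have h4 := h3.mul h2
  have h5 : HasDerivAt (fun x : ℝ => 3 * (x - 1)^2) (3 * (2 * (x-1))) x := by
    have : HasDerivAt (fun x : ℝ => (x - 1)^2) (2 * (x-1)^1 * 1) x :=
      (((hasDerivAt_id x).sub_const 1)).pow 2
    simpa using this.const_mul 3
  have := h4.sub h5
  refine this.congr_deriv ?_
  have : x * x⁻¹ = 1 := mul_inv_cancel₀ hx.ne'
  rw [psi]; rw [this]; ring

lemma phi_nonneg {x : ℝ} (hx : 0 ≤ x) : 0 ≤ phi x := by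
  rcases eq_or_lt_of_le hx with h0 | h0
  · simp [phi, ← h0]; norm_num
  have hdiff : ∀ s : Set ℝ, s ⊆ Set.Ioi 0 → DifferentiableOn ℝ phi s :=
    fun s hs y hy => ((phi_hasDeriv y (hs hy)).differentiableAt).differentiableWithinAt
  have hphi1 : phi 1 = 0 := by simp [phi]
  rcases le_total 1 x with hx1 | hx1
  · have hmono : MonotoneOn phi (Set.Ici 1) := by
      apply monotoneOn_of_deriv_nonneg (convex_Ici 1)
        ((hdiff (Set.Ici 1) (fun y hy => Set.mem_Ioi.mpr (lt_of_lt_of_le one_pos hy))).continuousOn)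
      · rw [interior_Ici]
        exact hdiff _ (fun y hy => Set.mem_Ioi.mpr (lt_trans one_pos hy))
      · intro y hy
        rw [interior_Ici] at hy
        rw [(phi_hasDeriv y (lt_trans one_pos hy)).deriv]
        have := psi_nonneg hy.le
        linarith
    have := hmono Set.self_mem_Ici (Set.mem_Ici.mpr hx1) hx1
    rw [hphi1] at this; exact this
  · have hanti : AntitoneOn phi (Set.Icc x 1) := by
      apply antitoneOn_of_deriv_nonpos (convex_Icc x 1)
        ((hdiff _ (fun y hy => Set.mem_Ioi.mpr (lt_of_lt_of_le h0 hy.1))).continuousOn)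
      · rw [interior_Icc]
        exact hdiff _ (fun y hy => Set.mem_Ioi.mpr (lt_trans h0 hy.1))
      · intro y hy
        rw [interior_Icc] at hy
        rw [(phi_hasDeriv y (lt_trans h0 hy.1)).deriv]
        have := psi_nonpos (lt_trans h0 hy.1) hy.2.le
        linarith
    have := hanti (Set.mem_Icc.mpr ⟨le_refl x, hx1⟩) (Set.mem_Icc.mpr ⟨hx1, le_refl 1⟩) hx1
    rw [hphi1] at this; exact this

/-- scaled pointwise Pinsker -/
lemma pointwise (p u : ℝ) (hp : 0 ≤ p) (hu : 0 < u) :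
    3 * (p - u)^2 ≤ (2*p + 4*u) * (p * Real.log (p / u) - p + u) := by
  rcases eq_or_lt_of_le hp with h0 | h0
  · rw [← h0]; nlinarith
  have key := phi_nonneg (le_of_lt (div_pos h0 hu))
  rw [phi, sub_nonneg] at key
  set x := p / u with hxdef
  have hpx : p = u * x := by rw [hxdef]; field_simp
  rw [hpx]
  calc 3 * (u * x - u)^2 = u^2 * (3 * (x - 1)^2) := by ring
    _ ≤ u^2 * ((2*x + 4) * (x * Real.log x - x + 1)) :=
        mul_le_mul_of_nonneg_left key (sq_nonneg u)
    _ = (2*(u*x) + 4*u) * ((u*x) * Real.log x - (u*x) + u) := by ring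

set_option maxHeartbeats 1000000 in
/-- Pinsker's inequality vs uniform on a finite type, plus nonnegativity of KL. -/
lemma pinsker {β : Type*} [Fintype β] (hN : 0 < Fintype.card β) (ν : β → ℝ) (hν : IsDist ν) :
    0 ≤ ∑ y, ν y * Real.log ((Fintype.card β : ℝ) * ν y) ∧
    ∑ y, |ν y - (Fintype.card β : ℝ)⁻¹|
      ≤ Real.sqrt (2 * ∑ y, ν y * Real.log ((Fintype.card β : ℝ) * ν y)) := by
  set N : ℝ := (Fintype.card β : ℝ) with hNdef
  have hN0 : (0:ℝ) < N := Nat.cast_pos.mpr hN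
  set u : ℝ := N⁻¹ with hudef
  have hu : 0 < u := inv_pos.mpr hN0
  set a : β → ℝ := fun y => (2 * ν y + 4 * u) / 3 with ha
  have ha0 : ∀ y, 0 < a y := fun y => by
    have := hν.1 y; rw [ha]; positivity
  set b : β → ℝ := fun y => (ν y - u)^2 / a y with hb
  have hb0 : ∀ y, 0 ≤ b y := fun y => div_nonneg (sq_nonneg _) (ha0 y).le
  have hptw : ∀ y, b y ≤ ν y * Real.log (N * ν y) - ν y + u := by
    intro y
    have h := pointwise (ν y) u (hν.1 y) hu
    have hlog : Real.log (ν y / u) = Real.log (N * ν y) := by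
      rw [hudef, div_eq_mul_inv, inv_inv, mul_comm]
    rw [hlog] at h
    rw [hb, div_le_iff₀ (ha0 y), ha]
    nlinarith
  have hsum_u : ∑ _y : β, u = 1 := by
    rw [Finset.sum_const, Finset.card_univ, nsmul_eq_mul]
    exact mul_inv_cancel₀ hN0.ne'
  have hsum_a : ∑ y, a y = 2 := by
    rw [ha]
    calc ∑ y, ((2 * ν y + 4 * u) / 3)
        = ((∑ y, 2 * ν y) + ∑ _y : β, 4 * u) / 3 := by
          rw [← Finset.sum_add_distrib, ← Finset.sum_div]
      _ = 2 := by
          rw [← Finset.mul_sum, ← Finset.mul_sum, hν.2, hsum_u]; norm_num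
  have hsum_b : ∑ y, b y ≤ ∑ y, ν y * Real.log (N * ν y) := by
    calc ∑ y, b y ≤ ∑ y, (ν y * Real.log (N * ν y) - ν y + u) :=
          Finset.sum_le_sum (fun y _ => hptw y)
      _ = ∑ y, ν y * Real.log (N * ν y) - (∑ y, ν y) + ∑ _y : β, u := by
          rw [Finset.sum_add_distrib, Finset.sum_sub_distrib]
      _ = ∑ y, ν y * Real.log (N * ν y) := by rw [hν.2, hsum_u]; ring
  have hKL : 0 ≤ ∑ y, ν y * Real.log (N * ν y) :=
    le_trans (Finset.sum_nonneg (fun y _ => hb0 y)) hsum_b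
  refine ⟨hKL, ?_⟩
  have habs : ∀ y, Real.sqrt (a y) * Real.sqrt (b y) = |ν y - u| := by
    intro y
    rw [← Real.sqrt_mul (ha0 y).le, hb, mul_div_cancel₀ _ (ha0 y).ne', Real.sqrt_sq_eq_abs]
  have cs := Finset.sum_mul_sq_le_sq_mul_sq Finset.univ
    (fun y => Real.sqrt (a y)) (fun y => Real.sqrt (b y))
  simp only [habs] at cs
  have e1 : ∑ i : β, Real.sqrt (a i) ^ 2 = ∑ i, a i :=
    Finset.sum_congr rfl (fun y _ => Real.sq_sqrt (ha0 y).le)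
  have e2 : ∑ i : β, Real.sqrt (b i) ^ 2 = ∑ i, b i :=
    Finset.sum_congr rfl (fun y _ => Real.sq_sqrt (hb0 y))
  rw [e1, e2, hsum_a] at cs
  refine (Real.le_sqrt (Finset.sum_nonneg (fun y _ => abs_nonneg _)) (by linarith)).mpr ?_
  calc (∑ y, |ν y - u|)^2 ≤ 2 * ∑ y, b y := cs
    _ ≤ 2 * ∑ y, ν y * Real.log (N * ν y) := by linarith

section PrLemmas
variable {A : Type*} [Fintype A] (μ : A → ℝ)

lemma Pr_congr {p q : A → Prop} (h : ∀ a, p a ↔ q a) : Pr μ p = Pr μ q := by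
  classical
  unfold Pr
  exact Finset.sum_congr rfl (fun a _ => if_congr (h a) rfl rfl)

lemma Pr_nonneg (hμ : ∀ a, 0 ≤ μ a) (p : A → Prop) : 0 ≤ Pr μ p :=
  Finset.sum_nonneg (fun a _ => by split; exacts [hμ a, le_rfl])

lemma Pr_ge_single (hμ : ∀ a, 0 ≤ μ a) {p : A → Prop} {z : A} (hz : p z) : μ z ≤ Pr μ p := by
  classical
  unfold Pr
  have := Finset.single_le_sum (f := fun a => if p a then μ a else 0)
    (fun a _ => by split; exacts [hμ a, le_rfl]) (Finset.mem_univ z)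
  simpa [hz] using this

lemma Pr_mono (hμ : ∀ a, 0 ≤ μ a) {p q : A → Prop} (h : ∀ a, p a → q a) : Pr μ p ≤ Pr μ q := by
  unfold Pr
  apply Finset.sum_le_sum
  intro a _
  by_cases hp : p a
  · simp [hp, h a hp]
  · simp only [hp, if_false]; split; exacts [hμ a, le_rfl]

end PrLemmas

section Core
variable {Ω : Type*} [Fintype Ω] {D r : ℕ}

/-- joint prob of block `s` equal to `y` and prefix matching `z` -/
noncomputable def pj (μ : Ω → ℝ) (g : Ω → Fin D → (Fin r → Bool)) (s : Fin D) (z : Ω)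
    (y : Fin r → Bool) : ℝ :=
  Pr μ (fun x => g x s = y ∧ ∀ t, t < s → g x t = g z t)

/-- prob of prefix of length `k` matching `z` -/
noncomputable def qq (μ : Ω → ℝ) (g : Ω → Fin D → (Fin r → Bool)) (k : ℕ) (z : Ω) : ℝ :=
  Pr μ (fun x => ∀ t : Fin D, (t : ℕ) < k → g x t = g z t)

variable (μ : Ω → ℝ) (g : Ω → Fin D → (Fin r → Bool))

lemma qq_fin (s : Fin D) (z : Ω) :
    Pr μ (fun x => ∀ t, t < s → g x t = g z t) = qq μ g (s : ℕ) z :=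
  Pr_congr μ (fun a => Iff.rfl)

lemma qq_zero (hμ : IsDist μ) (z : Ω) : qq μ g 0 z = 1 := by
  unfold qq
  rw [Pr_congr μ (q := fun _ => True) (fun a => by simp)]
  unfold Pr
  simpa using hμ.2

lemma qq_succ (s : Fin D) (z : Ω) : qq μ g ((s : ℕ) + 1) z = pj μ g s z (g z s) := by
  unfold qq pj
  apply Pr_congr
  intro x
  constructor
  · intro hx
    refine ⟨hx s (Nat.lt_succ_self _), fun t ht => hx t (Nat.lt_succ_of_lt (Fin.lt_def.mp ht))⟩
  · rintro ⟨h1, h2⟩ t ht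
    rcases Nat.lt_succ_iff_lt_or_eq.mp ht with h | h
    · exact h2 t (Fin.lt_def.mpr h)
    · have : t = s := Fin.ext h
      rw [this]; exact h1

lemma qq_top (z : Ω) : qq μ g D z = Pr μ (fun x => g x = g z) := by
  unfold qq
  apply Pr_congr
  intro x
  constructor
  · intro hx; funext t; exact hx t t.isLt
  · intro hx t _; rw [hx]

lemma mu_le_qq (hμ : IsDist μ) (k : ℕ) (z : Ω) : μ z ≤ qq μ g k z :=
  Pr_ge_single μ hμ.1 (fun _ _ => rfl)

lemma mu_le_pj (hμ : IsDist μ) (s : Fin D) (z : Ω) : μ z ≤ pj μ g s z (g z s) :=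
  Pr_ge_single μ hμ.1 ⟨rfl, fun _ _ => rfl⟩

lemma pj_nonneg (hμ : IsDist μ) (s : Fin D) (z : Ω) (y : Fin r → Bool) : 0 ≤ pj μ g s z y :=
  Pr_nonneg μ hμ.1 _

lemma qq_nonneg (hμ : IsDist μ) (k : ℕ) (z : Ω) : 0 ≤ qq μ g k z :=
  Pr_nonneg μ hμ.1 _

lemma pj_le_qq (hμ : IsDist μ) (s : Fin D) (z : Ω) (y : Fin r → Bool) :
    pj μ g s z y ≤ qq μ g (s : ℕ) z := by
  unfold pj qq
  exact Pr_mono μ hμ.1 (fun a ha => fun t ht => ha.2 t (Fin.lt_def.mpr ht))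

open Classical in
lemma sum_pj_mul (s : Fin D) (z : Ω) (c : (Fin r → Bool) → ℝ) :
    ∑ y, pj μ g s z y * c y
      = ∑ x, if (∀ t, t < s → g x t = g z t) then μ x * c (g x s) else 0 := by
  unfold pj Pr
  simp only [Finset.sum_mul]
  rw [Finset.sum_comm]
  apply Finset.sum_congr rfl
  intro x _
  by_cases hE : ∀ t, t < s → g x t = g z t
  · rw [if_pos hE]
    trans (∑ y, if g x s = y then μ x * c y else 0)
    · refine Finset.sum_congr rfl (fun y _ => ?_)
      by_cases hy : g x s = y
      · rw [if_pos ⟨hy, hE⟩, if_pos hy]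
      · rw [if_neg (fun hc => hy hc.1), if_neg hy, zero_mul]
    · rw [Finset.sum_ite_eq]; simp
  · simp [hE]

lemma sum_pj (hμ : IsDist μ) (s : Fin D) (z : Ω) :
    ∑ y, pj μ g s z y = qq μ g (s : ℕ) z := by
  have := sum_pj_mul μ g s z (fun _ => 1)
  simp only [mul_one] at this
  rw [this, ← qq_fin]
  unfold Pr
  apply Finset.sum_congr rfl
  intro x _
  split <;> simp


lemma qq_congr (k : ℕ) {z z' : Ω} (hm : ∀ t : Fin D, (t : ℕ) < k → g z t = g z' t) :
    qq μ g k z = qq μ g k z' := by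
  unfold qq
  exact Pr_congr μ (fun x =>
    ⟨fun hx t ht => (hx t ht).trans (hm t ht), fun hx t ht => (hx t ht).trans (hm t ht).symm⟩)

open Classical in
lemma grouping (hμ : IsDist μ) (s : Fin D) (c : Ω → (Fin r → Bool) → ℝ)
    (hc : ∀ z z', (∀ t, t < s → g z t = g z' t) → c z = c z') :
    ∑ z, μ z * ∑ y, (pj μ g s z y / qq μ g (s : ℕ) z) * c z y = ∑ z, μ z * c z (g z s) := by
  have key : ∀ z, μ z * ∑ y, (pj μ g s z y / qq μ g (s : ℕ) z) * c z y
      = ∑ x, (μ z / qq μ g (s : ℕ) z) *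
          (if (∀ t, t < s → g x t = g z t) then μ x * c z (g x s) else 0) := by
    intro z
    rw [← Finset.mul_sum]
    have e1 : ∑ y, (pj μ g s z y / qq μ g (s : ℕ) z) * c z y
        = (∑ y, pj μ g s z y * c z y) / qq μ g (s : ℕ) z := by
      rw [Finset.sum_div]
      exact Finset.sum_congr rfl (fun y _ => div_mul_eq_mul_div _ _ _)
    rw [e1, sum_pj_mul]
    ring
  rw [Finset.sum_congr rfl (fun z _ => key z), Finset.sum_comm]
  refine Finset.sum_congr rfl (fun x _ => ?_)
  have e2 : ∀ z, (μ z / qq μ g (s : ℕ) z) *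
      (if (∀ t, t < s → g x t = g z t) then μ x * c z (g x s) else 0)
      = (μ x * c x (g x s) / qq μ g (s : ℕ) x) *
        (if (∀ t, t < s → g z t = g x t) then μ z else 0) := by
    intro z
    by_cases hE : ∀ t, t < s → g x t = g z t
    · have hE' : ∀ t, t < s → g z t = g x t := fun t ht => (hE t ht).symm
      have hcz : c z = c x := hc z x hE'
      have hqz : qq μ g (s : ℕ) z = qq μ g (s : ℕ) x := qq_congr μ g _ hE'
      rw [if_pos hE, if_pos hE', hcz, hqz]
      ring
    · have hE' : ¬ ∀ t, t < s → g z t = g x t := fun hk => hE (fun t ht => (hk t ht).symm)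
      rw [if_neg hE, if_neg hE', mul_zero, mul_zero]
  rw [Finset.sum_congr rfl (fun z _ => e2 z), ← Finset.mul_sum]
  have e3 : ∑ z, (if (∀ t, t < s → g z t = g x t) then μ z else 0) = qq μ g (s : ℕ) x := by
    trans Pr μ (fun w => ∀ t, t < s → g w t = g x t)
    · unfold Pr
      exact Finset.sum_congr rfl (fun w _ => by congr)
    · exact qq_fin μ g s x
  rw [e3]
  by_cases hq : qq μ g (s : ℕ) x = 0
  · have hx0 : μ x = 0 := le_antisymm (hq ▸ mu_le_qq μ g hμ (s : ℕ) x) (hμ.1 x)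
    simp [hx0, hq]
  · rw [div_mul_cancel₀ _ hq]

open Classical in
lemma pushH_eq {β : Type*} [Fintype β] (f : Ω → β) :
    pushH μ f = ∑ z, μ z * Real.logb 2 (Pr μ (fun x => f x = f z))⁻¹ := by
  unfold pushH Pr
  simp only [Finset.sum_mul]
  rw [Finset.sum_comm]
  refine Finset.sum_congr rfl (fun z _ => ?_)
  trans (∑ b, if f z = b then
      μ z * Real.logb 2 (∑ a, if f a = b then μ a else 0)⁻¹ else 0)
  · refine Finset.sum_congr rfl (fun b _ => ?_)
    by_cases hb : f z = b
    · rw [if_pos hb, if_pos hb]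
    · rw [if_neg hb, if_neg hb, zero_mul]
  · rw [Finset.sum_ite_eq]
    simp

lemma pj_congr (s : Fin D) {z z' : Ω} (hm : ∀ t, t < s → g z t = g z' t) (y : Fin r → Bool) :
    pj μ g s z y = pj μ g s z' y := by
  unfold pj
  exact Pr_congr μ (fun x =>
    ⟨fun hx => ⟨hx.1, fun t ht => (hx.2 t ht).trans (hm t ht)⟩,
     fun hx => ⟨hx.1, fun t ht => (hx.2 t ht).trans (hm t ht).symm⟩⟩)

/-- conditional KL divergence to uniform of block `s` given prefix class of `z` -/
noncomputable def KLb (μ : Ω → ℝ) (g : Ω → Fin D → (Fin r → Bool)) (s : Fin D) (z : Ω) : ℝ :=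
  ∑ y, (pj μ g s z y / qq μ g (s : ℕ) z) *
    Real.log ((2 ^ r : ℝ) * (pj μ g s z y / qq μ g (s : ℕ) z))

lemma nu_isDist (hμ : IsDist μ) (s : Fin D) (z : Ω) (hz : μ z ≠ 0) :
    IsDist (fun y => pj μ g s z y / qq μ g (s : ℕ) z) := by
  have hq : 0 < qq μ g (s : ℕ) z :=
    lt_of_lt_of_le (lt_of_le_of_ne (hμ.1 z) (Ne.symm hz)) (mu_le_qq μ g hμ _ z)
  constructor
  · exact fun y => div_nonneg (pj_nonneg μ g hμ s z y) hq.le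
  · rw [← Finset.sum_div, sum_pj μ g hμ, div_self hq.ne']

lemma chain (hμ : IsDist μ) :
    ∑ s : Fin D, ∑ z, μ z * KLb μ g s z
      = (D : ℝ) * r * Real.log 2 - Real.log 2 * pushH μ (fun x => g x) := by
  have hgrp : ∀ s : Fin D, ∑ z, μ z * KLb μ g s z
      = ∑ z, μ z * Real.log ((2 ^ r : ℝ) * (pj μ g s z (g z s) / qq μ g (s : ℕ) z)) := by
    intro s
    exact grouping μ g hμ s
      (fun z y => Real.log ((2 ^ r : ℝ) * (pj μ g s z y / qq μ g (s : ℕ) z)))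
      (fun z z' hm => by
        funext y
        rw [pj_congr μ g s hm, qq_congr μ g (s : ℕ) hm])
  rw [Finset.sum_congr rfl (fun s _ => hgrp s), Finset.sum_comm]
  have hz_tel : ∀ z, ∑ s : Fin D,
      μ z * Real.log ((2 ^ r : ℝ) * (pj μ g s z (g z s) / qq μ g (s : ℕ) z))
      = μ z * ((D : ℝ) * r * Real.log 2 + Real.log (qq μ g D z)) := by
    intro z
    by_cases hz : μ z = 0
    · simp [hz]
    have hμz : 0 < μ z := lt_of_le_of_ne (hμ.1 z) (Ne.symm hz)
    have hterm : ∀ s : Fin D,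
        Real.log ((2 ^ r : ℝ) * (pj μ g s z (g z s) / qq μ g (s : ℕ) z))
          = (r : ℝ) * Real.log 2 +
            (Real.log (qq μ g ((s : ℕ) + 1) z) - Real.log (qq μ g (s : ℕ) z)) := by
      intro s
      have hq1 : 0 < qq μ g (s : ℕ) z := lt_of_lt_of_le hμz (mu_le_qq μ g hμ _ z)
      have hq2 : 0 < pj μ g s z (g z s) := lt_of_lt_of_le hμz (mu_le_pj μ g hμ s z)
      rw [Real.log_mul (by positivity) (by positivity), Real.log_div hq2.ne' hq1.ne',
        Real.log_pow, ← qq_succ]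
    rw [Finset.sum_congr rfl (fun s _ => by rw [hterm s]), ← Finset.mul_sum]
    congr 1
    rw [Finset.sum_add_distrib, Finset.sum_const, Finset.card_univ, Fintype.card_fin,
      nsmul_eq_mul]
    have htel : ∑ s : Fin D, (Real.log (qq μ g ((s : ℕ) + 1) z) - Real.log (qq μ g (s : ℕ) z))
        = Real.log (qq μ g D z) := by
      rw [Fin.sum_univ_eq_sum_range
        (fun k => Real.log (qq μ g (k + 1) z) - Real.log (qq μ g k z)),
        Finset.sum_range_sub (fun k => Real.log (qq μ g k z))]
      rw [qq_zero μ g hμ, Real.log_one, sub_zero]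
    rw [htel]
    ring
  rw [Finset.sum_congr rfl (fun z _ => hz_tel z)]
  have hpH : Real.log 2 * pushH μ (fun x => g x) = - ∑ z, μ z * Real.log (qq μ g D z) := by
    rw [pushH_eq, Finset.mul_sum, ← Finset.sum_neg_distrib]
    refine Finset.sum_congr rfl (fun z _ => ?_)
    have : Pr μ (fun x => g x = g z) = qq μ g D z := (qq_top μ g z).symm
    rw [this, Real.logb, Real.log_inv]
    have h2 : Real.log 2 ≠ 0 := by
      have := Real.log_pos (by norm_num : (1:ℝ) < 2); linarith
    field_simp
  have hsum1 : ∑ z, μ z * ((D : ℝ) * r * Real.log 2 + Real.log (qq μ g D z))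
      = (D : ℝ) * r * Real.log 2 * (∑ z, μ z) + ∑ z, μ z * Real.log (qq μ g D z) := by
    rw [Finset.sum_congr rfl (fun z _ =>
      (by ring : μ z * ((D : ℝ) * r * Real.log 2 + Real.log (qq μ g D z))
        = (D : ℝ) * r * Real.log 2 * μ z + μ z * Real.log (qq μ g D z))),
      Finset.sum_add_distrib, ← Finset.mul_sum]
  rw [hsum1, hμ.2]
  rw [show (∑ z, μ z * Real.log (qq μ g D z))
      = - (Real.log 2 * pushH μ (fun x => g x)) by rw [hpH]; ring]
  ring

end Core

lemma master {Ω : Type*} [Fintype Ω] {D r : ℕ} (μ : Ω → ℝ) (g : Ω → Fin D → (Fin r → Bool))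
    (hμ : IsDist μ) (hD : 0 < D) :
    vsErr μ g ≤ Real.sqrt (2 * ((D : ℝ) * r * Real.log 2
      - Real.log 2 * pushH μ (fun x => g x)) / D) := by
  have hcard : (Fintype.card (Fin r → Bool) : ℝ) = (2 : ℝ) ^ r := by
    rw [Fintype.card_fun]
    push_cast
    simp
  have hcardpos : 0 < Fintype.card (Fin r → Bool) := Fintype.card_pos
  set Etot := ∑ s : Fin D, ∑ z, μ z * KLb μ g s z with hEtot
  -- nonnegativity of each weighted KL term
  have hKL0 : ∀ (s : Fin D) (z : Ω), 0 ≤ μ z * KLb μ g s z := by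
    intro s z
    by_cases hz : μ z = 0
    · simp [hz]
    · refine mul_nonneg (hμ.1 z) ?_
      have hp := (pinsker hcardpos _ (nu_isDist μ g hμ s z hz)).1
      rw [hcard] at hp
      exact hp
  have hE0 : 0 ≤ Etot :=
    Finset.sum_nonneg fun s _ => Finset.sum_nonneg fun z _ => hKL0 s z
  -- rewrite vsErr
  have hvs : vsErr μ g = (D : ℝ)⁻¹ * ∑ s : Fin D, ∑ z, μ z *
      ∑ y, |pj μ g s z y / qq μ g (s : ℕ) z - ((2 : ℝ) ^ r)⁻¹| := by
    unfold vsErr pj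
    simp only [qq_fin μ g]
  -- Pinsker per conditional distribution
  have hstep1 : ∑ s : Fin D, ∑ z, μ z *
      ∑ y, |pj μ g s z y / qq μ g (s : ℕ) z - ((2 : ℝ) ^ r)⁻¹|
      ≤ ∑ s : Fin D, ∑ z, μ z * Real.sqrt (2 * KLb μ g s z) := by
    refine Finset.sum_le_sum fun s _ => Finset.sum_le_sum fun z _ => ?_
    by_cases hz : μ z = 0
    · simp [hz]
    · refine mul_le_mul_of_nonneg_left ?_ (hμ.1 z)
      have hp := (pinsker hcardpos _ (nu_isDist μ g hμ s z hz)).2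
      rw [hcard] at hp
      exact hp
  -- Cauchy–Schwarz
  have hcs : (∑ s : Fin D, ∑ z, μ z * Real.sqrt (2 * KLb μ g s z)) ^ 2
      ≤ (D : ℝ) * (2 * Etot) := by
    have cs := Finset.sum_mul_sq_le_sq_mul_sq Finset.univ
      (fun p : Fin D × Ω => Real.sqrt (μ p.2))
      (fun p : Fin D × Ω => Real.sqrt (μ p.2 * (2 * KLb μ g p.1 p.2)))
    have e1 : ∀ p : Fin D × Ω, Real.sqrt (μ p.2) * Real.sqrt (μ p.2 * (2 * KLb μ g p.1 p.2))
        = μ p.2 * Real.sqrt (2 * KLb μ g p.1 p.2) := by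
      intro p
      rw [← Real.sqrt_mul (hμ.1 p.2),
        show μ p.2 * (μ p.2 * (2 * KLb μ g p.1 p.2)) = μ p.2 ^ 2 * (2 * KLb μ g p.1 p.2) by ring,
        Real.sqrt_mul (sq_nonneg _), Real.sqrt_sq (hμ.1 p.2)]
    have e2 : ∑ p : Fin D × Ω, Real.sqrt (μ p.2) ^ 2 = (D : ℝ) := by
      rw [Finset.sum_congr rfl fun p _ => Real.sq_sqrt (hμ.1 p.2), Fintype.sum_prod_type]
      simp [hμ.2]
    have e3 : ∑ p : Fin D × Ω, Real.sqrt (μ p.2 * (2 * KLb μ g p.1 p.2)) ^ 2 = 2 * Etot := by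
      rw [Finset.sum_congr rfl fun p _ => Real.sq_sqrt (by
        by_cases hz : μ p.2 = 0
        · simp [hz]
        · exact mul_nonneg (hμ.1 p.2) (by
            have := hKL0 p.1 p.2
            have hμz : 0 < μ p.2 := lt_of_le_of_ne (hμ.1 p.2) (Ne.symm hz)
            nlinarith)), Fintype.sum_prod_type, hEtot]
      rw [Finset.mul_sum]
      refine Finset.sum_congr rfl fun s _ => ?_
      rw [Finset.mul_sum]
      exact Finset.sum_congr rfl fun z _ => by ring
    rw [Finset.sum_congr rfl (fun p _ => e1 p), Fintype.sum_prod_type] at cs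
    rw [e2, e3] at cs
    exact cs
  have hsq2 : 0 ≤ ∑ s : Fin D, ∑ z, μ z * Real.sqrt (2 * KLb μ g s z) :=
    Finset.sum_nonneg fun s _ => Finset.sum_nonneg fun z _ =>
      mul_nonneg (hμ.1 z) (Real.sqrt_nonneg _)
  have hD0 : (0:ℝ) < (D : ℝ) := Nat.cast_pos.mpr hD
  have hstep2 : ∑ s : Fin D, ∑ z, μ z * Real.sqrt (2 * KLb μ g s z)
      ≤ Real.sqrt ((D : ℝ) * (2 * Etot)) :=
    (Real.le_sqrt hsq2 (by positivity)).mpr hcs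
  calc vsErr μ g ≤ (D : ℝ)⁻¹ * Real.sqrt ((D : ℝ) * (2 * Etot)) := by
        rw [hvs]
        exact mul_le_mul_of_nonneg_left (le_trans hstep1 hstep2) (by positivity)
    _ = Real.sqrt (2 * Etot / (D : ℝ)) := by
        rw [show (D : ℝ) * (2 * Etot) = (2 * Etot / (D : ℝ)) * (D : ℝ) ^ 2 by
            field_simp,
          Real.sqrt_mul (by positivity), Real.sqrt_sq hD0.le]
        field_simp
    _ = Real.sqrt (2 * ((D : ℝ) * r * Real.log 2
          - Real.log 2 * pushH μ (fun x => g x)) / D) := by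
        rw [hEtot, chain μ g hμ]

/-- Deterministic entropy condensers yield very strong extractors: if `h` has output
entropy at least `(1−ε)m` on every `μ ∈ F`, and `(ln 2)/2·ε ≤ D/m`, then splitting
`h(x)` into `D` blocks of `m/D` bits gives a very strong `δ`-extractor for `F` with
`δ = sqrt((ln 2)/2 · ε · m/D)` (i.e. the extractor error is at most `2δ`). -/
theorem condenser_to_very_strong_extractor {n m D : ℕ} (hD : 0 < D) (hm : 0 < m)
    (hdvd : D ∣ m) (ε : ℝ) (hε0 : 0 ≤ ε) (hε1 : ε ≤ 1)
    (hside : Real.log 2 / 2 * ε ≤ (D : ℝ) / m)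
    (F : Set ((Fin n → Bool) → ℝ)) (hF : ∀ μ ∈ F, IsDist μ)
    (h : (Fin n → Bool) → (Fin m → Bool))
    (hent : ∀ μ ∈ F, (1 - ε) * m ≤ pushH μ h) :
    ∀ μ ∈ F,
      vsErr μ (fun x s => fun j : Fin (m / D) => h x ⟨(s : ℕ) * (m / D) + (j : ℕ), by
          have hj := j.isLt
          have h1 : (s : ℕ) * (m / D) + (j : ℕ) < ((s : ℕ) + 1) * (m / D) := by
            rw [add_mul, one_mul]; exact Nat.add_lt_add_left hj _
          have h2 : ((s : ℕ) + 1) * (m / D) ≤ D * (m / D) :=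
            Nat.mul_le_mul_right _ s.isLt
          exact h1.trans_le (le_of_le_of_eq h2 (Nat.mul_div_cancel' hdvd))⟩)
        ≤ 2 * Real.sqrt (Real.log 2 / 2 * ε * m / D) := by
  intro μ hμF
  have hμ : IsDist μ := hF μ hμF
  have hr0 : 0 < m / D := Nat.div_pos (Nat.le_of_dvd hm hdvd) hD
  have hDr : D * (m / D) = m := Nat.mul_div_cancel' hdvd
  have hlog2 : (0:ℝ) < Real.log 2 := Real.log_pos (by norm_num)
  have hD0 : (0:ℝ) < (D:ℝ) := Nat.cast_pos.mpr hD
  refine le_trans (master μ _ hμ hD) ?_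
  set gv : (Fin n → Bool) → Fin D → Fin (m / D) → Bool :=
    fun x s => fun j : Fin (m / D) => h x ⟨(s : ℕ) * (m / D) + (j : ℕ), by
          have hj := j.isLt
          have h1 : (s : ℕ) * (m / D) + (j : ℕ) < ((s : ℕ) + 1) * (m / D) := by
            rw [add_mul, one_mul]; exact Nat.add_lt_add_left hj _
          have h2 : ((s : ℕ) + 1) * (m / D) ≤ D * (m / D) :=
            Nat.mul_le_mul_right _ s.isLt
          exact h1.trans_le (le_of_le_of_eq h2 (Nat.mul_div_cancel' hdvd))⟩ with hgv
  have hpush : pushH μ (fun x => gv x) = pushH μ h := by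
    rw [pushH_eq, pushH_eq]
    refine Finset.sum_congr rfl fun z _ => ?_
    have hiff : ∀ x : Fin n → Bool, gv x = gv z ↔ h x = h z := by
      intro x
      constructor
      · intro hg
        funext i
        have hs : i.val / (m / D) < D := by
          rw [Nat.div_lt_iff_lt_mul hr0]
          have := i.isLt
          omega
        have hj : i.val % (m / D) < m / D := Nat.mod_lt _ hr0
        have e : ∀ w : Fin n → Bool,
            h w i = gv w ⟨i.val / (m / D), hs⟩ ⟨i.val % (m / D), hj⟩ := by
          intro w
          show h w i = h w ⟨(i.val / (m / D)) * (m / D) + i.val % (m / D), _⟩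
          congr 1
          refine Fin.ext ?_
          show i.val = (i.val / (m / D)) * (m / D) + i.val % (m / D)
          rw [mul_comm]
          exact (Nat.div_add_mod i.val (m / D)).symm
        rw [e x, e z, hg]
      · intro hh
        funext s j
        show h x _ = h z _
        rw [hh]
    rw [Pr_congr μ hiff]
  rw [hpush]
  have hmr : (D : ℝ) * ((m / D : ℕ) : ℝ) = (m : ℝ) := by exact_mod_cast congrArg Nat.cast hDr
  have hent' := hent μ hμF
  have harg : 2 * ((D : ℝ) * ((m / D : ℕ) : ℝ) * Real.log 2 - Real.log 2 * pushH μ h) / D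
      ≤ 2 * (Real.log 2 * (ε * m)) / D := by
    refine (div_le_div_iff_of_pos_right hD0).mpr ?_
    rw [hmr]
    nlinarith [hent', hlog2]
  calc Real.sqrt (2 * ((D : ℝ) * ((m / D : ℕ) : ℝ) * Real.log 2 - Real.log 2 * pushH μ h) / D)
      ≤ Real.sqrt (2 * (Real.log 2 * (ε * m)) / D) := Real.sqrt_le_sqrt harg
    _ = 2 * Real.sqrt (Real.log 2 / 2 * ε * m / D) := by
        rw [show (2:ℝ) * (Real.log 2 * (ε * (m:ℝ))) / (D:ℝ)
            = 2 ^ 2 * (Real.log 2 / 2 * ε * (m:ℝ) / (D:ℝ)) by ring,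
          Real.sqrt_mul (by positivity), Real.sqrt_sq (by norm_num : (0:ℝ) ≤ 2)]
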